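/- For all real \(\alpha > -1\) and every integer \(n \ge 1\), \(\frac{1}{(\alpha+1)(\alpha+2)}\sum_{k=1}^n \binom{k+\alpha}{k-1}\binom{k+\alpha+1}{k-2} = \frac{1}{\alpha+1}\binom{n+\alpha+1}{n-2}\sum_{m=0}^{n-2}\frac{(-n+2)_m(-\alpha-2)_m(\alpha+3)_m}{(2)_m(\alpha+4)_m\, m!}\). -/

import Mathlib

open Finset

/-- Rising factorial (Pochhammer symbol) `(x)_k = x(x+1)⋯(x+k-1)`. -/
noncomputable def poch (x : ℝ) (k : ℕ) : ℝ := (ascPochhammer ℝ k).eval x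

/-- Generalized binomial coefficient `C(y, m) = (y-m+1)_m / m!` for real `y`. -/
noncomputable def gbinom (y : ℝ) (m : ℕ) : ℝ := poch (y - m + 1) m / m.factorial

/-- Generalized binomial coefficient with integer lower index, zero for negative index. -/
noncomputable def gbinomZ (y : ℝ) (m : ℤ) : ℝ := if 0 ≤ m then gbinom y m.toNat else 0

/-- Generalized Laguerre polynomial `L_n^{(a)}(x)`, defined for all real `a`. -/
noncomputable def Lag (n : ℕ) (a : ℝ) (x : ℝ) : ℝ :=
  ∑ k ∈ range (n + 1),
    (-1 : ℝ) ^ k * poch (a + k + 1) (n - k) / (n - k).factorial * x ^ k / k.factorial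

/-! ### Auxiliary lemmas about `poch` -/

lemma poch_zero (x : ℝ) : poch x 0 = 1 := by simp [poch]

lemma poch_succ (x : ℝ) (k : ℕ) : poch x (k+1) = poch x k * (x + k) := by
  simp [poch, ascPochhammer_succ_eval]

lemma poch_succ_left (x : ℝ) (k : ℕ) : poch x (k+1) = x * poch (x+1) k := by
  simp [poch, ascPochhammer_succ_left, Polynomial.eval_mul, Polynomial.eval_comp]

lemma poch_shift (x : ℝ) (k : ℕ) : poch x k * (x + k) = x * poch (x+1) k := by
  rw [← poch_succ, poch_succ_left]

lemma poch_prod (x : ℝ) (k : ℕ) : poch x k = ∏ i ∈ range k, (x + i) := by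
  induction k with
  | zero => simp [poch_zero]
  | succ k ih => rw [poch_succ, ih, prod_range_succ]

lemma poch_pos {x : ℝ} (hx : 0 < x) (k : ℕ) : 0 < poch x k := by
  rw [poch_prod]; exact prod_pos fun i _ => by positivity

lemma poch_one (k : ℕ) : poch 1 k = k.factorial := by
  induction k with
  | zero => simp [poch_zero]
  | succ k ih => rw [poch_succ, ih]; push_cast [Nat.factorial_succ]; ring

lemma poch_two (k : ℕ) : poch 2 k = (k+1).factorial := by
  have h := poch_succ_left 1 k
  rw [poch_one (k+1)] at h
  norm_num at h
  rw [← h]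

lemma poch_add (x : ℝ) (a b : ℕ) : poch x (a+b) = poch x a * poch (x+a) b := by
  induction b with
  | zero => simp [poch_zero]
  | succ b ih => rw [← Nat.add_assoc, poch_succ, ih, poch_succ]; push_cast; ring

lemma poch_neg (x : ℝ) (k : ℕ) : poch (-x - k + 1) k = (-1)^k * poch x k := by
  induction k generalizing x with
  | zero => simp [poch_zero]
  | succ k ih =>
    have h1 : -x - ((k+1:ℕ):ℝ) + 1 = -x - k := by push_cast; ring
    have h2 : (-x - (k:ℝ)) = -(x+1) - k + 1 := by ring
    rw [h1, poch_succ, h2, ih (x+1), ← h2, poch_succ_left]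
    ring

lemma fact_ne (m : ℕ) : (m.factorial : ℝ) ≠ 0 := Nat.cast_ne_zero.mpr m.factorial_ne_zero

lemma poch2_ne (m : ℕ) : poch 2 m ≠ 0 := ne_of_gt (poch_pos (by norm_num) m)

/-! ### Chu–Vandermonde -/

lemma gbinom_eq_choose (y : ℝ) (m : ℕ) : gbinom y m = Ring.choose y m := by
  have h := Ring.descPochhammer_eq_factorial_smul_choose (R := ℝ) y m
  rw [Polynomial.descPochhammer_smeval_eq_ascPochhammer,
    Polynomial.ascPochhammer_smeval_eq_eval] at h
  rw [gbinom, poch, h, nsmul_eq_mul]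
  have : (m.factorial : ℝ) ≠ 0 := Nat.cast_ne_zero.mpr m.factorial_ne_zero
  field_simp

lemma gbinom_vandermonde (x y : ℝ) (K : ℕ) :
    ∑ m ∈ range (K+1), gbinom x m * gbinom y (K-m) = gbinom (x+y) K := by
  have h := Ring.add_choose_eq (r := x) (s := y) K (Commute.all x y)
  rw [Finset.Nat.sum_antidiagonal_eq_sum_range_succ_mk] at h
  simp only [gbinom_eq_choose]
  exact h.symm

lemma vdm2 (b : ℝ) (N : ℕ) :
    ∑ m ∈ range (N+1), poch (-(N:ℝ)) m * poch b m / (poch 2 m * m.factorial)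
      = poch (2-b) N / poch 2 N := by
  have hN1 : ((N:ℝ)+1) ≠ 0 := by positivity
  have key : ∀ m ∈ range (N+1),
      ((N:ℝ)+1) * (poch (-(N:ℝ)) m * poch b m / (poch 2 m * m.factorial))
        = gbinom (-b) m * gbinom ((N:ℝ)+1) (N-m) := by
    intro m hm
    rw [mem_range, Nat.lt_succ_iff] at hm
    have e2 : poch (-(N:ℝ)) m = (-1)^m * poch ((N:ℝ)-m+1) m := by
      have h := poch_neg ((N:ℝ)-m+1) m
      have h' : (-((N:ℝ)-m+1) - m + 1) = -(N:ℝ) := by ring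
      rw [h'] at h; exact h
    have e3 : ((N:ℝ)+1 - ((N-m:ℕ):ℝ) + 1) = 2+(m:ℝ) := by
      rw [Nat.cast_sub hm]; ring
    have e4 : poch 2 m * poch (2+(m:ℝ)) (N-m) = poch 2 N := by
      have h := (poch_add 2 m (N-m)).symm
      rwa [Nat.add_sub_cancel' hm] at h
    have e5 : ((N-m:ℕ).factorial:ℝ) * poch ((N:ℝ)-m+1) m = N.factorial := by
      have h := poch_add 1 (N-m) m
      rw [Nat.sub_add_cancel hm, poch_one, poch_one] at h
      rw [h, Nat.cast_sub hm]; ring_nf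
    have f1 : poch 2 N = ((N+1).factorial : ℝ) := poch_two N
    have f2 : ((N+1).factorial:ℝ) = ((N:ℝ)+1) * N.factorial := by
      push_cast [Nat.factorial_succ]; ring
    have hq := poch2_ne m
    have hfm := fact_ne m
    have hfn := fact_ne (N-m)
    unfold gbinom
    rw [e2, e3, poch_neg b m]
    field_simp
    linear_combination (poch b m) *
      (((N:ℝ)+1) * e5 - f2 - f1 - e4)
  have hsum := sum_congr rfl key
  rw [← mul_sum, gbinom_vandermonde (-b) ((N:ℝ)+1) N] at hsum
  have harg : (-b + ((N:ℝ)+1) - (N:ℝ) + 1) = 2-b := by ring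
  rw [gbinom, harg] at hsum
  have hrhs : ((N:ℝ)+1) * (poch (2-b) N / poch 2 N) = poch (2-b) N / N.factorial := by
    rw [poch_two]
    push_cast [Nat.factorial_succ]
    field_simp
  exact mul_left_cancel₀ hN1 (by rw [hsum, hrhs])

/-! ### The hypergeometric term and the key contiguous relation -/

/-- The summand of the terminating `₃F₂`. -/
noncomputable def tt (α : ℝ) (n m : ℕ) : ℝ :=
  poch (-(n:ℝ)+2) m * poch (-α-2) m * poch (α+3) m / (poch 2 m * poch (α+4) m * m.factorial)

lemma key1 (α : ℝ) (hα : -1 < α) (k m : ℕ) :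
    (α+(k:ℝ)+4) * tt α (k+3) m - ((k:ℝ)+1) * tt α (k+2) m
      = (α+3) * (poch (-(k:ℝ)-1) m * poch (-α-2) m / (poch 2 m * m.factorial)) := by
  have hq := poch2_ne m
  have hfm := fact_ne m
  have hp4 : poch (α+4) m ≠ 0 := ne_of_gt (poch_pos (by linarith) m)
  have R1 : poch (-(k:ℝ)-1) m * ((-(k:ℝ)-1) + m) = (-(k:ℝ)-1) * poch (-(k:ℝ)) m := by
    have h := poch_shift (-(k:ℝ)-1) m
    rwa [show (-(k:ℝ)-1+1) = -(k:ℝ) by ring] at h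
  have R2 : poch (α+3) m * ((α+3) + m) = (α+3) * poch (α+4) m := by
    have h := poch_shift (α+3) m
    rwa [show (α+3+1) = α+4 by ring] at h
  unfold tt
  rw [show (-(((k:ℕ)+3:ℕ):ℝ)+2) = -(k:ℝ)-1 by push_cast; ring,
      show (-(((k:ℕ)+2:ℕ):ℝ)+2) = -(k:ℝ) by push_cast; ring]
  field_simp
  linear_combination (poch (-α-2) m * poch (-(k:ℝ)-1) m) * R2
    - (poch (-α-2) m * poch (α+3) m) * R1

lemma tt_top (α : ℝ) (k : ℕ) : tt α (k+2) (k+1) = 0 := by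
  unfold tt
  rw [show (-(((k:ℕ)+2:ℕ):ℝ)+2) = -(k:ℝ) by push_cast; ring]
  rw [poch_prod]
  rw [Finset.prod_eq_zero (i := k) (by simp) (by ring)]
  simp

lemma vdm3 (α : ℝ) (k : ℕ) :
    ∑ m ∈ range (k+2), poch (-(k:ℝ)-1) m * poch (-α-2) m / (poch 2 m * m.factorial)
      = poch (α+4) (k+1) / poch 2 (k+1) := by
  have h := vdm2 (-α-2) (k+1)
  rw [show (2-(-α-2)) = α+4 by ring] at h
  rw [show ((k:ℕ)+1+1) = k+2 from rfl] at h
  rwa [show (-(((k:ℕ)+1:ℕ):ℝ)) = -(k:ℝ)-1 by push_cast; ring] at h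

lemma gZ_eq (α : ℝ) (j n : ℕ) (h : n = j+2) :
    gbinomZ ((n:ℝ)+α+1) ((n:ℤ)-2) = poch (α+4) j / j.factorial := by
  subst h
  unfold gbinomZ
  rw [if_pos (by push_cast; omega)]
  have ht : (((j+2:ℕ):ℤ)-2).toNat = j := by omega
  rw [ht]
  unfold gbinom
  rw [show ((((j:ℕ)+2:ℕ)):ℝ)+α+1 - (j:ℝ) + 1 = α+4 by push_cast; ring]

theorem gamma0_sum (α : ℝ) (hα : -1 < α) (n : ℕ) (hn : 1 ≤ n) :
    1 / ((α + 1) * (α + 2)) *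
        ∑ k ∈ Icc 1 n, gbinom ((k : ℝ) + α) (k - 1) * gbinomZ ((k : ℝ) + α + 1) ((k : ℤ) - 2)
      = 1 / (α + 1) * gbinomZ ((n : ℝ) + α + 1) ((n : ℤ) - 2) *
        ∑ m ∈ range (n - 1),
          poch (-(n : ℝ) + 2) m * poch (-α - 2) m * poch (α + 3) m /
            (poch 2 m * poch (α + 4) m * m.factorial) := by
  have hα1 : (α+1) ≠ 0 := by linarith
  have hα2 : (α+2) ≠ 0 := by linarith
  induction n, hn using Nat.le_induction with
  | base =>
    have h0 : gbinomZ (((1:ℕ):ℝ) + α + 1) (((1:ℕ):ℤ) - 2) = 0 := by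
      unfold gbinomZ; norm_num
    rw [Finset.Icc_self, Finset.sum_singleton, h0]
    simp
  | succ n hn ih =>
    match n, hn, ih with
    | 1, _, _ =>
      -- prove the case `n = 2` directly
      have h0 : gbinomZ (((1:ℕ):ℝ) + α + 1) (((1:ℕ):ℤ) - 2) = 0 := by
        unfold gbinomZ; norm_num
      have h2 : gbinomZ (((2:ℕ):ℝ) + α + 1) (((2:ℕ):ℤ) - 2) = 1 := by
        unfold gbinomZ
        rw [if_pos (by norm_num)]
        norm_num [gbinom, poch_zero]
      have h1 : gbinom (((2:ℕ):ℝ) + α) (2-1) = α + 2 := by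
        unfold gbinom
        rw [show (2-1) = 1 from rfl]
        rw [show (((2:ℕ):ℝ) + α - ((1:ℕ):ℝ) + 1) = α + 2 by push_cast; ring]
        rw [show poch (α+2) 1 = poch (α+2) (0+1) from rfl, poch_succ, poch_zero]
        norm_num [Nat.factorial_one]
      rw [show ((1:ℕ)+1) = 2 from rfl]
      rw [show Icc (1:ℕ) 2 = {1, 2} from rfl]
      rw [Finset.sum_insert (by decide), Finset.sum_singleton, h0, h1, h2]
      rw [show ((2:ℕ)-1) = 1 from rfl, show range 1 = {0} from rfl, Finset.sum_singleton]
      simp only [poch_zero, Nat.factorial_zero]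
      field_simp
      ring
    | (k+2), _, ih =>
      have ih' := ih
      clear ih
      -- rewrite the hypergeometric sums via `tt`
      have hsum3 : ∀ (N : ℕ), ∑ m ∈ range (N - 1),
          poch (-(N : ℝ) + 2) m * poch (-α - 2) m * poch (α + 3) m /
            (poch 2 m * poch (α + 4) m * m.factorial) = ∑ m ∈ range (N-1), tt α N m := by
        intro N; rfl
      rw [hsum3] at ih' ⊢
      rw [show (k+2+1) - 1 = k+2 from rfl, show (k+2) - 1 = k+1 from rfl] at *
      rw [gZ_eq α (k+1) (k+2+1) rfl]
      rw [gZ_eq α k (k+2) rfl] at ih'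
      rw [Finset.sum_Icc_succ_top (by omega : 1 ≤ k+2+1)]
      set T2 := ∑ m ∈ range (k+2), tt α (k+2+1) m with hT2
      set T1 := ∑ m ∈ range (k+1), tt α (k+2) m with hT1def
      -- the key contiguous relation, summed up
      have KEY : (α+(k:ℝ)+4) * T2 - ((k:ℝ)+1) * (∑ m ∈ range (k+2), tt α (k+2) m)
          = (α+3) * (poch (α+4) (k+1) / poch 2 (k+1)) := by
        rw [← vdm3 α k, Finset.mul_sum, Finset.mul_sum, Finset.mul_sum, ← Finset.sum_sub_distrib]
        exact Finset.sum_congr rfl (fun m _ => key1 α hα k m)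
      rw [Finset.sum_range_succ, tt_top, add_zero, ← hT1def] at KEY
      -- the value of the new top term of the left-hand sum
      have ha' : gbinom (((k+2+1:ℕ)) + α) (k+2+1-1) * gbinomZ (((k+2+1:ℕ):ℝ) + α + 1) (((k+2+1:ℕ):ℤ) - 2)
          = poch (α+2) (k+2) / (k+2).factorial * (poch (α+4) (k+1) / (k+1).factorial) := by
        rw [gZ_eq α (k+1) (k+2+1) rfl]
        congr 1
        unfold gbinom
        rw [show (k+2+1-1) = k+2 from rfl]
        rw [show ((((k:ℕ)+2+1:ℕ)):ℝ) + α - (((k:ℕ)+2:ℕ):ℝ) + 1 = α+2 by push_cast; ring]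
      rw [ha']
      -- final algebraic bookkeeping
      have hk0 : (0:ℝ) ≤ (k:ℝ) := Nat.cast_nonneg k
      have hne : (α+(k:ℝ)+4) ≠ 0 := by linarith
      have hPk : poch (α+4) k ≠ 0 := ne_of_gt (poch_pos (by linarith) k)
      have PF1 : poch (α+4) (k+1) = poch (α+4) k * (α+4+k) := poch_succ (α+4) k
      have PF2 : poch (α+2) (k+2) = (α+2)*((α+3)*poch (α+4) k) := by
        rw [show (k+2) = (k+1)+1 from rfl, poch_succ_left, show α+2+1 = α+3 by ring,
          poch_succ_left, show α+3+1 = α+4 by ring]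
      have PF3 : poch 2 (k+1) = ((k+2).factorial :ℝ) := by rw [poch_two]
      have hf1 : ((k+1).factorial : ℝ) = ((k:ℝ)+1) * k.factorial := by
        push_cast [Nat.factorial_succ]; ring
      have hf2 : ((k+2).factorial : ℝ) = ((k:ℝ)+2) * ((k+1).factorial : ℝ) := by
        push_cast [Nat.factorial_succ]; ring
      have hfk := fact_ne k
      rw [mul_add, ih', PF2, PF1, hf2, hf1]
      rw [PF3, PF1, hf2, hf1] at KEY
      have hk1 : ((k:ℝ)+1) ≠ 0 := by linarith
      have hk2 : ((k:ℝ)+2) ≠ 0 := by linarith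
      have hT2v : T2 = (((k:ℝ)+1) * T1
          + (α+3) * (poch (α+4) k * (α+4+(k:ℝ)) / (((k:ℝ)+2) * (((k:ℝ)+1) * (k.factorial:ℝ)))))
          / (α+(k:ℝ)+4) := by
        rw [eq_div_iff hne]
        have hd : ((k:ℝ)+2) * (((k:ℝ)+1) * (k.factorial:ℝ)) ≠ 0 := by
          exact mul_ne_zero hk2 (mul_ne_zero hk1 hfk)
        field_simp at KEY ⊢
        linarith [KEY]
      rw [hT2v]
      field_simp
      ring
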